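/- Let {e₁, …, eₙ} be an orthonormal family in a Hilbert space H, Mᵢ ≥ mᵢ > 0 for each i, and f : [a,b] → H Bochner integrable with Re⟨Mᵢeᵢ − f(t), f(t) − mᵢeᵢ⟩ ≥ 0 for each i ∈ {1,…,n} and a.e. t ∈ [a,b]. Then (∑ᵢ₌₁ⁿ 4mᵢMᵢ/(mᵢ+Mᵢ)²)^{1/2} · ∫ₐᵇ ‖f(t)‖ dt ≤ ‖∫ₐᵇ f(t) dt‖. -/

import Mathlib

open MeasureTheory RCLike

lemma ptwise {𝕜 H : Type*} [RCLike 𝕜] [NormedAddCommGroup H] [InnerProductSpace 𝕜 H]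
    {e x : H} (hene : ‖e‖ = 1) {mm MM : ℝ} (hm : 0 < mm) (hmM : mm ≤ MM)
    (hx : 0 ≤ re (inner 𝕜 ((MM : 𝕜) • e - x) (x - (mm : 𝕜) • e) : 𝕜)) :
    2 * Real.sqrt (mm * MM) / (mm + MM) * ‖x‖ ≤ re (inner 𝕜 e x : 𝕜) := by
  have hM : 0 < MM := lt_of_lt_of_le hm hmM
  have hkey : ‖x‖ ^ 2 + mm * MM ≤ (mm + MM) * re (inner 𝕜 e x : 𝕜) := by
    have hexp := hx
    simp only [inner_sub_left, inner_sub_right, inner_smul_left, inner_smul_right,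
      map_sub, map_add, RCLike.conj_ofReal, mul_comm] at hexp
    simp only [map_sub, RCLike.mul_re, RCLike.ofReal_re, RCLike.ofReal_im] at hexp
    have h1 : re (inner 𝕜 x x : 𝕜) = ‖x‖ ^ 2 := by rw [← inner_self_eq_norm_sq (𝕜 := 𝕜)]
    have h2 : re (inner 𝕜 e e : 𝕜) = 1 := by
      rw [inner_self_eq_norm_sq (𝕜 := 𝕜), hene]; norm_num
    have h3 : re (inner 𝕜 x e : 𝕜) = re (inner 𝕜 e x : 𝕜) := inner_re_symm (𝕜 := 𝕜) x e
    have h4 : im (inner 𝕜 e e : 𝕜) = 0 := inner_self_im (𝕜 := 𝕜) (x := e)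
    rw [h1, h2, h3, h4] at hexp
    nlinarith [hexp]
  have hpos : 0 < mm + MM := by linarith
  rw [div_mul_eq_mul_div, div_le_iff₀ hpos]
  have hsq : 2 * Real.sqrt (mm * MM) * ‖x‖ ≤ ‖x‖ ^ 2 + mm * MM := by
    nlinarith [Real.sq_sqrt (by positivity : (0:ℝ) ≤ mm * MM),
      sq_nonneg (‖x‖ - Real.sqrt (mm * MM))]
  calc 2 * Real.sqrt (mm * MM) * ‖x‖ ≤ ‖x‖ ^ 2 + mm * MM := hsq
    _ ≤ (mm + MM) * re (inner 𝕜 e x : 𝕜) := hkey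
    _ = re (inner 𝕜 e x : 𝕜) * (mm + MM) := mul_comm _ _

theorem stmt_10 {𝕜 H : Type*} [RCLike 𝕜] [NormedAddCommGroup H] [InnerProductSpace 𝕜 H]
    [NormedSpace ℝ H] [IsScalarTower ℝ 𝕜 H] [CompleteSpace H]
    {a b : ℝ} {f : ℝ → H} (hf : IntegrableOn f (Set.Icc a b))
    {n : ℕ} {e : Fin n → H} (he : Orthonormal 𝕜 e)
    {m M : Fin n → ℝ} (hm : ∀ i, 0 < m i) (hmM : ∀ i, m i ≤ M i)
    (h : ∀ i, ∀ᵐ t ∂(volume.restrict (Set.Icc a b)),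
      0 ≤ RCLike.re (inner 𝕜 ((M i : 𝕜) • e i - f t) (f t - (m i : 𝕜) • e i) : 𝕜)) :
    Real.sqrt (∑ i, 4 * m i * M i / (m i + M i) ^ 2) * ∫ t in Set.Icc a b, ‖f t‖ ≤
      ‖∫ t in Set.Icc a b, f t‖ := by
  set μ := volume.restrict (Set.Icc a b) with hμ
  set c : Fin n → ℝ := fun i => 2 * Real.sqrt (m i * M i) / (m i + M i) with hc
  set S : ℝ := ∫ t in Set.Icc a b, ‖f t‖ with hS
  set x : H := ∫ t in Set.Icc a b, f t with hx
  have hcpos : ∀ i, 0 ≤ c i := by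
    intro i
    have : 0 < m i + M i := by have := hm i; have := hmM i; linarith
    positivity
  have hSnn : 0 ≤ S := integral_nonneg fun t => norm_nonneg _
  -- key: c i * S ≤ re ⟪e i, x⟫
  have hstep : ∀ i, c i * S ≤ re (inner 𝕜 (e i) x : 𝕜) := by
    intro i
    have hint : Integrable (fun t => re (inner 𝕜 (e i) (f t) : 𝕜)) μ :=
      ((hf.const_inner (e i)).re)
    have hae : ∀ᵐ t ∂μ, c i * ‖f t‖ ≤ re (inner 𝕜 (e i) (f t) : 𝕜) := by
      filter_upwards [h i] with t ht
      exact ptwise (he.1 i) (hm i) (hmM i) ht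
    have h1 : ∫ t, c i * ‖f t‖ ∂μ ≤ ∫ t, re (inner 𝕜 (e i) (f t) : 𝕜) ∂μ :=
      integral_mono_ae (hf.norm.const_mul _) hint hae
    have h2 : ∫ t, c i * ‖f t‖ ∂μ = c i * S := by
      rw [integral_const_mul]
    have h3 : ∫ t, re (inner 𝕜 (e i) (f t) : 𝕜) ∂μ = re (inner 𝕜 (e i) x : 𝕜) := by
      rw [integral_re (hf.const_inner (e i)), integral_inner hf]
    rw [h2, h3] at h1; exact h1
  -- Bessel
  have hbessel : ∑ i, ‖(inner 𝕜 (e i) x : 𝕜)‖ ^ 2 ≤ ‖x‖ ^ 2 :=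
    he.sum_inner_products_le x
  have hsum : (∑ i, 4 * m i * M i / (m i + M i) ^ 2) * S ^ 2 ≤ ‖x‖ ^ 2 := by
    rw [Finset.sum_mul]
    refine le_trans (Finset.sum_le_sum fun i _ => ?_) hbessel
    have hci2 : 4 * m i * M i / (m i + M i) ^ 2 = (c i) ^ 2 := by
      rw [hc]; rw [div_pow, mul_pow]
      rw [Real.sq_sqrt (by nlinarith [hm i, hmM i] : (0:ℝ) ≤ m i * M i)]
      ring
    rw [hci2, ← mul_pow]
    have h1 : c i * S ≤ re (inner 𝕜 (e i) x : 𝕜) := hstep i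
    have h2 : |re (inner 𝕜 (e i) x : 𝕜)| ≤ ‖(inner 𝕜 (e i) x : 𝕜)‖ := RCLike.abs_re_le_norm _
    have h0 : 0 ≤ c i * S := mul_nonneg (hcpos i) hSnn
    calc (c i * S) ^ 2 ≤ (re (inner 𝕜 (e i) x : 𝕜)) ^ 2 := by nlinarith
      _ = |re (inner 𝕜 (e i) x : 𝕜)| ^ 2 := (sq_abs _).symm
      _ ≤ ‖(inner 𝕜 (e i) x : 𝕜)‖ ^ 2 := pow_le_pow_left₀ (abs_nonneg _) h2 2
  -- conclude by sqrt
  have hAnn : 0 ≤ ∑ i, 4 * m i * M i / (m i + M i) ^ 2 := by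
    refine Finset.sum_nonneg fun i _ => ?_
    exact div_nonneg (by nlinarith [hm i, hmM i]) (sq_nonneg _)
  have := Real.sqrt_le_sqrt hsum
  rwa [Real.sqrt_mul hAnn, Real.sqrt_sq hSnn, Real.sqrt_sq (norm_nonneg x)] at this
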